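/- arXiv:2005.04252 — 2 statements merged into one kernel-verified Lean document; each statement's English description precedes it below -/
import Mathlib

section
/- Let M be a matroid on a finite ground set E with a linear order < on E. Then any two bases have a meet in the internal order: for all bases B and B' of M there exists a basis C of M such that IP_<(C) ⊆ IP_<(B) ∩ IP_<(B'), and for every basis D with IP_<(D) ⊆ IP_<(B) and IP_<(D) ⊆ IP_<(B') one has IP_<(D) ⊆ IP_<(C). Consequently, the poset of internally passive sets ordered by inclusion becomes a lattice after attaching an artificial maximum. (Theorem 4.1.B (thm:Dawson-Chari B), after Las Vergnas.) -/
/-!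
STATEMENT 15 (Theorem `thm:Dawson-Chari`, part B, after Las Vergnas): any two
bases have a meet in the internal order: for bases `B, B'` there is a basis `C`
with `IP_<(C) ⊆ IP_<(B) ∩ IP_<(B')` which dominates every common lower bound.
(Hence the poset of internally passive sets becomes a lattice after attaching
an artificial maximum.)
-/

/-- The internally passive set of a basis `B` with respect to a strict order `lt`. -/
def IP {α : Type*} (M : Matroid α) (lt : α → α → Prop) (B : Set α) : Set α :=
  {b | b ∈ B ∧ ∃ b', b' ∉ B ∧ lt b' b ∧ M.IsBase (insert b' (B \ {b}))}

namespace InternalOrderMeet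

open Set

variable {α : Type*} [Fintype α] [LinearOrder α] {M : Matroid α}

lemma mem_IP_iff {B : Set α} {b : α} :
    b ∈ IP M (· < ·) B ↔ b ∈ B ∧ ∃ b', b' ∉ B ∧ b' < b ∧ M.IsBase (insert b' (B \ {b})) :=
  Iff.rfl

section Ground

variable (hE : M.E = Set.univ)
include hE

lemma ground_mem (x : α) : x ∈ M.E := by rw [hE]; trivial

lemma ground_sub (S : Set α) : S ⊆ M.E := by rw [hE]; exact subset_univ S

/-- Swap criterion via closure. -/
lemma swap_base_iff {B : Set α} {x e : α} (hB : M.IsBase B) (hx : x ∈ B) (he : e ∉ B) :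
    M.IsBase (insert e (B \ {x})) ↔ e ∉ M.closure (B \ {x}) := by
  have hind : M.Indep (B \ {x}) := hB.indep.subset diff_subset
  have heB : e ∉ B \ {x} := fun h => he h.1
  constructor
  · intro h
    have h2 := h.indep
    rw [hind.insert_indep_iff_of_notMem heB] at h2
    exact h2.2
  · intro h
    refine hB.exchange_isBase_of_indep he ?_
    rw [hind.insert_indep_iff_of_notMem heB]
    exact ⟨ground_mem hE e, h⟩

/-- An internally active element blocks all smaller swaps. -/
lemma mem_closure_of_not_IP {B : Set α} {q e : α} (hB : M.IsBase B) (hq : q ∈ B)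
    (hqIP : q ∉ IP M (· < ·) B) (helt : e < q) (heB : e ∉ B) :
    e ∈ M.closure (B \ {q}) := by
  by_contra h
  exact hqIP ⟨hq, e, heB, helt, (swap_base_iff hE hB hq heB).2 h⟩

lemma mem_IP_of {B : Set α} {q e : α} (hB : M.IsBase B) (hq : q ∈ B) (helt : e < q)
    (heB : e ∉ B) (h : e ∉ M.closure (B \ {q})) : q ∈ IP M (· < ·) B :=
  ⟨hq, e, heB, helt, (swap_base_iff hE hB hq heB).2 h⟩

end Ground

lemma closure_le {S T : Set α} (h : S ⊆ M.closure T) : M.closure S ⊆ M.closure T :=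
  Matroid.closure_subset_closure_of_subset_closure h

/-- basic set identity used repeatedly -/
lemma diff_eq_insert {D : Set α} {a p : α} (haD : a ∈ D) (hap : a ≠ p) :
    D \ {p} = insert a (D \ {a, p}) := by
  ext x
  simp only [mem_diff, mem_singleton_iff, mem_insert_iff, not_or]
  constructor
  · rintro ⟨hx, hxp⟩
    by_cases hxa : x = a
    · exact Or.inl hxa
    · exact Or.inr ⟨hx, hxa, hxp⟩
  · rintro (rfl | ⟨hx, _, hxp⟩)
    exacts [⟨haD, hap⟩, ⟨hx, hxp⟩]

lemma insert_diff_eq {D : Set α} {a g q : α} (hgq : g ≠ q) (haq : a ≠ q) :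
    (insert g (D \ {a})) \ {q} = insert g (D \ {a, q}) := by
  ext x
  simp only [mem_diff, mem_singleton_iff, mem_insert_iff, not_or]
  constructor
  · rintro ⟨(rfl | ⟨hx, hxa⟩), hxq⟩
    · exact Or.inl rfl
    · exact Or.inr ⟨hx, hxa, hxq⟩
  · rintro (rfl | ⟨hx, hxa, hxq⟩)
    exacts [⟨Or.inl rfl, hgq⟩, ⟨Or.inr ⟨hx, hxa⟩, hxq⟩]

lemma insert_insert_eq {D : Set α} {a g p : α} (haD : a ∈ D) (hap : a ≠ p) :
    insert a (insert g (D \ {a, p})) = insert g (D \ {p}) := by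
  rw [Set.insert_comm, ← diff_eq_insert haD hap]

/-- Step lemma (monotonicity part): pivoting an internally active `a` up to `g`
preserves internal passivity of all other elements. -/
lemma step_mono (hE : M.E = Set.univ) {D : Set α} {a g : α}
    (hD : M.IsBase D) (haD : a ∈ D) (hgD : g ∉ D) (hag : a < g)
    (haIP : a ∉ IP M (· < ·) D) (hD₂ : M.IsBase (insert g (D \ {a}))) {p : α}
    (hpIP : p ∈ IP M (· < ·) D) (hpa : p ≠ a) :
    p ∈ IP M (· < ·) (insert g (D \ {a})) := by
  obtain ⟨hpD, e, heD, help, hbase⟩ := hpIP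
  have hgp : g ≠ p := fun h => hgD (h ▸ hpD)
  have hga : g ≠ a := fun h => hgD (h ▸ haD)
  have he_cl : e ∉ M.closure (D \ {p}) := (swap_base_iff hE hD hpD heD).1 hbase
  have hg_cl_a : g ∉ M.closure (D \ {a}) := (swap_base_iff hE hD haD hgD).1 hD₂
  have hA1 : D \ {p} = insert a (D \ {a, p}) := diff_eq_insert haD hpa.symm
  have hA2 : D \ {a} = insert p (D \ {a, p}) := by
    rw [diff_eq_insert hpD hpa, Set.pair_comm]
  have hA3 : (insert g (D \ {a})) \ {p} = insert g (D \ {a, p}) :=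
    insert_diff_eq hgp hpa.symm
  have hpD₂ : p ∈ insert g (D \ {a}) := Or.inr ⟨hpD, hpa⟩
  have hAsub : D \ {a, p} ⊆ D \ {a} := fun x hx => ⟨hx.1, fun h => hx.2 (Or.inl h)⟩
  have hgA : g ∉ M.closure (D \ {a, p}) :=
    fun h => hg_cl_a (M.closure_subset_closure hAsub h)
  by_cases hgcl : g ∈ M.closure (D \ {p})
  · -- Case 1 : closures agree
    have hgcl' : g ∈ M.closure (insert a (D \ {a, p})) := hA1 ▸ hgcl
    have ha_mem : a ∈ M.closure (insert g (D \ {a, p})) :=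
      (Matroid.closure_exchange ⟨hgcl', hgA⟩).1
    have key : M.closure (insert g (D \ {a, p})) = M.closure (insert a (D \ {a, p})) := by
      apply subset_antisymm
      · exact closure_le (insert_subset hgcl'
          ((M.subset_closure _ (ground_sub hE _)).trans
            (M.closure_subset_closure (subset_insert _ _))))
      · exact closure_le (insert_subset ha_mem
          ((M.subset_closure _ (ground_sub hE _)).trans
            (M.closure_subset_closure (subset_insert _ _))))
    have he2 : e ∉ M.closure ((insert g (D \ {a})) \ {p}) := by
      rw [hA3, key, ← hA1]; exact he_cl
    have heg : e ≠ g := fun h => he_cl (h ▸ hgcl)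
    have heD₂ : e ∉ insert g (D \ {a}) := by
      rintro (rfl | ⟨h, _⟩)
      exacts [heg rfl, heD h]
    exact mem_IP_of hE hD₂ hpD₂ help heD₂ he2
  · -- Case 2 : the swap (p ↦ g) is a basis
    have hGp : M.IsBase (insert g (D \ {p})) := (swap_base_iff hE hD hpD hgD).2 hgcl
    rcases lt_or_gt_of_ne (Ne.symm hpa) with hap | hap
    · -- a < p : use a as the witness
      have haD₂ : a ∉ insert g (D \ {a}) := by
        rintro (h | ⟨_, h⟩)
        exacts [hga h.symm, h rfl]
      refine ⟨hpD₂, a, haD₂, hap, ?_⟩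
      rw [hA3, insert_insert_eq haD hpa.symm]
      exact hGp
    · -- p < a : use e as the witness via closure exchange
      have he_cl_a : e ∈ M.closure (D \ {a}) :=
        mem_closure_of_not_IP hE hD haD haIP (help.trans hap) heD
      have he2 : e ∉ M.closure ((insert g (D \ {a})) \ {p}) := by
        rw [hA3]
        intro hecl
        have heA : e ∉ M.closure (D \ {a, p}) :=
          fun h => he_cl (M.closure_subset_closure (hA1 ▸ subset_insert a (D \ {a, p})) h)
        have hg_mem : g ∈ M.closure (insert e (D \ {a, p})) :=
          (Matroid.closure_exchange ⟨hecl, heA⟩).1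
        have hsub : M.closure (insert e (D \ {a, p})) ⊆ M.closure (insert p (D \ {a, p})) :=
          closure_le (insert_subset (hA2 ▸ he_cl_a)
            ((M.subset_closure _ (ground_sub hE _)).trans
              (M.closure_subset_closure (subset_insert _ _))))
        exact hg_cl_a (hA2 ▸ hsub hg_mem)
      have heg : e ≠ g := ne_of_lt (help.trans (hap.trans hag))
      have heD₂ : e ∉ insert g (D \ {a}) := by
        rintro (rfl | ⟨h, _⟩)
        exacts [heg rfl, heD h]
      exact mem_IP_of hE hD₂ hpD₂ help heD₂ he2

section WithC

variable (hE : M.E = Set.univ) {X C : Set α}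
  (hC : M.IsBase C) (hXC : X ⊆ C) (hIPC : IP M (· < ·) C ⊆ X)
include hE hC hXC hIPC

/-- If `y ∈ C \ X` exceeds all of `D \ C` and `insert g (D \ {y})` is a basis with
`g ∈ C \ {y}`, we get a contradiction. -/
lemma kill {D : Set α} {a q g : α} (hD : M.IsBase D)
    (hmax : ∀ x ∈ D, x ∉ C → x ≤ a)
    (hqC : q ∈ C) (hqX : q ∉ X) (haq : a < q) (hqD : q ∈ D)
    (hgC : g ∈ C) (hgq : g ≠ q)
    (hGq : M.IsBase (insert g (D \ {q}))) : False := by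
  have hqIP : q ∉ IP M (· < ·) C := fun h => hqX (hIPC h)
  have hsub : insert g (D \ {q}) ⊆ M.closure (C \ {q}) := by
    rintro x (rfl | ⟨hxD, hxq⟩)
    · exact M.subset_closure _ (ground_sub hE _) ⟨hgC, hgq⟩
    · by_cases hxC : x ∈ C
      · exact M.subset_closure _ (ground_sub hE _) ⟨hxC, hxq⟩
      · rcases lt_or_gt_of_ne (show x ≠ q from hxq) with hlt | hgt
        · exact mem_closure_of_not_IP hE hC hqC hqIP hlt hxC
        · exact absurd (hmax x hxD hxC) (not_le.2 (haq.trans hgt))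
  have hq_mem : q ∈ M.closure (C \ {q}) := by
    have h1 : q ∈ M.closure (insert g (D \ {q})) := by
      rw [hGq.closure_eq]; exact ground_mem hE q
    exact closure_le hsub h1
  exact hC.indep.notMem_closure_diff_of_mem hqC hq_mem

lemma g_mem_X {D : Set α} {a g : α} (hD : M.IsBase D)
    (hmax : ∀ x ∈ D, x ∉ C → x ≤ a)
    (hgC : g ∈ C) (hgD : g ∉ D) (hag : a < g) : g ∈ X := by
  by_contra hgX
  have hgIP : g ∉ IP M (· < ·) C := fun h => hgX (hIPC h)
  have hDF : D ⊆ M.closure (C \ {g}) := by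
    intro x hx
    have hxg : x ≠ g := fun h => hgD (h ▸ hx)
    by_cases hxC : x ∈ C
    · exact M.subset_closure _ (ground_sub hE _) ⟨hxC, hxg⟩
    · rcases lt_or_gt_of_ne hxg with hlt | hgt
      · exact mem_closure_of_not_IP hE hC hgC hgIP hlt hxC
      · exact absurd (hmax x hx hxC) (not_le.2 (hag.trans hgt))
  have hg_mem : g ∈ M.closure (C \ {g}) := by
    have h1 : g ∈ M.closure D := by rw [hD.closure_eq]; exact ground_mem hE g
    exact closure_le hDF h1
  exact hC.indep.notMem_closure_diff_of_mem hgC hg_mem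

/-- Step lemma (staying below `X`). -/
lemma step_X {D : Set α} {a g : α} (hD : M.IsBase D)
    (hIPD : IP M (· < ·) D ⊆ X) (haD : a ∈ D) (haC : a ∉ C)
    (hmax : ∀ x ∈ D, x ∉ C → x ≤ a)
    (hgC : g ∈ C) (hgD : g ∉ D) (hag : a < g)
    (hD₂ : M.IsBase (insert g (D \ {a}))) :
    IP M (· < ·) (insert g (D \ {a})) ⊆ X := by
  intro q hq
  obtain ⟨hqD₂, e, heD₂, heq, hbase⟩ := hq
  by_cases hqg : q = g
  · subst hqg
    exact g_mem_X hE hC hXC hIPC hD hmax hgC hgD hag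
  -- q ≠ g, so q ∈ D, q ≠ a
  have hqDa : q ∈ D \ {a} := by
    rcases hqD₂ with rfl | h
    · exact absurd rfl hqg
    · exact h
  obtain ⟨hqD, hqa'⟩ := hqDa
  have hqa : q ≠ a := hqa'
  by_contra hqX
  have hqIPD : q ∉ IP M (· < ·) D := fun h => hqX (hIPD h)
  have haIPD : a ∉ IP M (· < ·) D := fun h => haC (hXC (hIPD h))
  have hgq : g ≠ q := Ne.symm hqg
  have hga : g ≠ a := fun h => hgD (h ▸ haD)
  have he_cl : e ∉ M.closure ((insert g (D \ {a})) \ {q}) :=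
    (swap_base_iff hE hD₂ hqD₂ heD₂).1 hbase
  have hA3 : (insert g (D \ {a})) \ {q} = insert g (D \ {a, q}) := insert_diff_eq hgq hqa.symm
  have hA1 : D \ {q} = insert a (D \ {a, q}) := diff_eq_insert haD hqa.symm
  have hA2 : D \ {a} = insert q (D \ {a, q}) := by
    rw [diff_eq_insert hqD hqa, Set.pair_comm]
  have hg_cl_a : g ∉ M.closure (D \ {a}) := (swap_base_iff hE hD haD hgD).1 hD₂
  by_cases hea : e = a
  · -- witness is a itself; then insert g (D \ {q}) is a basis and a < q
    subst hea
    have haq : e < q := heq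
    have hGq : M.IsBase (insert g (D \ {q})) := by
      have hbase2 : M.IsBase (insert e ((insert g (D \ {e})) \ {q})) :=
        (swap_base_iff hE hD₂ hqD₂ heD₂).2 he_cl
      rwa [hA3, insert_insert_eq haD hqa.symm] at hbase2
    have hqC : q ∈ C := by
      by_contra hqC
      exact absurd (hmax q hqD hqC) (not_le.2 haq)
    exact kill hE hC hXC hIPC hD hmax hqC hqX haq hqD hgC hgq hGq
  · -- e ∉ D
    have heD : e ∉ D := by
      intro h
      exact heD₂ (Or.inr ⟨h, hea⟩)
    have hecl_q : e ∈ M.closure (D \ {q}) :=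
      mem_closure_of_not_IP hE hD hqD hqIPD heq heD
    have heA : e ∉ M.closure (D \ {a, q}) := by
      intro h
      refine he_cl ?_
      rw [hA3]
      exact M.closure_subset_closure (subset_insert _ _) h
    rcases lt_or_gt_of_ne hqa with hqlt | haq
    · -- q < a : direct contradiction
      have hecl_a : e ∈ M.closure (D \ {a}) :=
        mem_closure_of_not_IP hE hD haD haIPD (heq.trans hqlt) heD
      have hq_mem : q ∈ M.closure (insert e (D \ {a, q})) :=
        (Matroid.closure_exchange ⟨hA2 ▸ hecl_a, heA⟩).1
      have hsub : M.closure (insert e (D \ {a, q})) ⊆ M.closure (D \ {q}) := by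
        refine closure_le (insert_subset hecl_q ?_)
        exact (M.subset_closure _ (ground_sub hE _)).trans
          (M.closure_subset_closure (hA1 ▸ subset_insert _ _))
      exact hD.indep.notMem_closure_diff_of_mem hqD (hsub hq_mem)
    · -- a < q
      have hGq : M.IsBase (insert g (D \ {q})) := by
        refine (swap_base_iff hE hD hqD hgD).2 ?_
        intro hgcl
        have hgA : g ∉ M.closure (D \ {a, q}) := by
          intro h
          refine hg_cl_a (M.closure_subset_closure ?_ h)
          exact fun x hx => ⟨hx.1, fun h' => hx.2 (Or.inl h')⟩
        have ha_mem : a ∈ M.closure (insert g (D \ {a, q})) :=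
          (Matroid.closure_exchange ⟨hA1 ▸ hgcl, hgA⟩).1
        have hsub : M.closure (D \ {q}) ⊆ M.closure (insert g (D \ {a, q})) := by
          rw [hA1]
          refine closure_le (insert_subset ha_mem ?_)
          exact (M.subset_closure _ (ground_sub hE _)).trans
            (M.closure_subset_closure (subset_insert _ _))
        refine he_cl ?_
        rw [hA3]
        exact hsub hecl_q
      have hqC : q ∈ C := by
        by_contra hqC
        exact absurd (hmax q hqD hqC) (not_le.2 haq)
      exact kill hE hC hXC hIPC hD hmax hqC hqX haq hqD hgC hgq hGq

/-- Main induction: every basis whose IP-set is inside `X` has its IP-set inside `IP C`. -/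
lemma IP_le_of_IP_le_X :
    ∀ n (D : Set α), M.IsBase D → IP M (· < ·) D ⊆ X → (D \ C).ncard ≤ n →
      IP M (· < ·) D ⊆ IP M (· < ·) C := by
  intro n
  induction n with
  | zero =>
    intro D hD hIPD hcard
    have h0 : (D \ C).ncard = 0 := Nat.le_zero.1 hcard
    have hDC : D ⊆ C :=
      diff_eq_empty.1 ((Set.ncard_eq_zero (Set.toFinite _)).1 h0)
    rw [hD.eq_of_subset_isBase hC hDC]
  | succ n ih =>
    intro D hD hIPD hcard
    by_cases hDC : D ⊆ C
    · rw [hD.eq_of_subset_isBase hC hDC]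
    have hne : (D \ C).Nonempty := Set.diff_nonempty.2 hDC
    -- pick the maximum element a of D \ C
    have hfin : (D \ C).Finite := Set.toFinite _
    have hsne : hfin.toFinset.Nonempty := by
      rwa [Set.Finite.toFinset_nonempty]
    obtain ⟨a, haDC, hmax0⟩ : ∃ a ∈ D \ C, ∀ x ∈ D \ C, x ≤ a := by
      refine ⟨hfin.toFinset.max' hsne, ?_, fun x hx => ?_⟩
      · have := hfin.toFinset.max'_mem hsne
        rwa [Set.Finite.mem_toFinset] at this
      · exact hfin.toFinset.le_max' x (by rwa [Set.Finite.mem_toFinset])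
    have hmax : ∀ x ∈ D, x ∉ C → x ≤ a := fun x hx hxC => hmax0 x ⟨hx, hxC⟩
    obtain ⟨haD, haC⟩ := haDC
    obtain ⟨g, hgCD, hD₂⟩ := hD.exchange hC ⟨haD, haC⟩
    obtain ⟨hgC, hgD⟩ := hgCD
    have haIP : a ∉ IP M (· < ·) D := fun h => haC (hXC (hIPD h))
    have hag : a < g := by
      rcases lt_trichotomy a g with h | h | h
      · exact h
      · exact absurd (h ▸ haD) hgD
      · exact absurd ⟨haD, g, hgD, h, hD₂⟩ haIP
    have hstep1 : IP M (· < ·) D ⊆ IP M (· < ·) (insert g (D \ {a})) := by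
      intro p hp
      exact step_mono hE hD haD hgD hag haIP hD₂ hp (fun h => haIP (h ▸ hp))
    have hstep2 : IP M (· < ·) (insert g (D \ {a})) ⊆ X :=
      step_X hE hC hXC hIPC hD hIPD haD haC hmax hgC hgD hag hD₂
    have hset : insert g (D \ {a}) \ C = (D \ C) \ {a} := by
      ext x
      simp only [mem_diff, mem_insert_iff, mem_singleton_iff]
      constructor
      · rintro ⟨(rfl | ⟨hx1, hx2⟩), hxC⟩
        · exact absurd hgC hxC
        · exact ⟨⟨hx1, hxC⟩, hx2⟩
      · rintro ⟨⟨hx1, hxC⟩, hx2⟩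
        exact ⟨Or.inr ⟨hx1, hx2⟩, hxC⟩
    have hcard₂ : ((insert g (D \ {a})) \ C).ncard ≤ n := by
      rw [hset]
      have hlt : ((D \ C) \ {a}).ncard < (D \ C).ncard :=
        Set.ncard_sdiff_singleton_lt_of_mem ⟨haD, haC⟩ hfin
      omega
    exact fun p hp => ih _ hD₂ hstep2 hcard₂ (hstep1 hp)

end WithC

/-! ### Existence of the minimal basis containing `X` -/

/-- position of an element in the linear order -/
def ordN (a : α) : ℕ := (Finset.univ.filter (· < a)).card

lemma ordN_lt {a b : α} (h : a < b) : ordN a < ordN b := by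
  refine Finset.card_lt_card ⟨fun x hx => ?_, fun hsub => ?_⟩
  · rw [Finset.mem_filter] at hx ⊢
    exact ⟨hx.1, hx.2.trans h⟩
  · have := hsub (by simp [Finset.mem_filter, h] : a ∈ Finset.univ.filter (· < b))
    rw [Finset.mem_filter] at this
    exact lt_irrefl a this.2

noncomputable def nval (S : Set α) : ℕ :=
  ∑ x ∈ S.toFinite.toFinset, 2 ^ ordN x

lemma nval_insert {S : Set α} {x : α} (hx : x ∉ S) :
    nval (insert x S) = 2 ^ ordN x + nval S := by
  classical
  unfold nval
  have h : (insert x S).toFinite.toFinset = insert x (S.toFinite.toFinset) := by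
    ext y
    simp only [Set.Finite.mem_toFinset, Finset.mem_insert, Set.mem_insert_iff]
  rw [h, Finset.sum_insert (by simpa [Set.Finite.mem_toFinset] using hx)]

lemma exists_min_basis (hE : M.E = Set.univ) {X : Set α} (hX : M.Indep X) :
    ∃ C, M.IsBase C ∧ X ⊆ C ∧ IP M (· < ·) C ⊆ X := by
  classical
  obtain ⟨B₀, hB₀, hXB₀⟩ := hX.exists_isBase_superset
  set T : Set (Set α) := {B | M.IsBase B ∧ X ⊆ B} with hT
  have hTne : T.Nonempty := ⟨B₀, hB₀, hXB₀⟩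
  have hTfin : T.Finite := Set.toFinite _
  obtain ⟨C, hCT, hCmin⟩ := Set.Finite.exists_minimalFor nval T hTfin hTne
  have hCmin' : ∀ B ∈ T, nval C ≤ nval B := by
    intro B hB
    rcases le_or_gt (nval C) (nval B) with h | h
    · exact h
    · exact hCmin hB h.le
  refine ⟨C, hCT.1, hCT.2, ?_⟩
  rintro c ⟨hcC, e, heC, hec, hbase⟩
  by_contra hcX
  have hce : c ≠ e := fun h => heC (h ▸ hcC)
  have hXC' : X ⊆ insert e (C \ {c}) :=
    fun x hx => Or.inr ⟨hCT.2 hx, fun h => hcX (h ▸ hx)⟩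
  have hmem : insert e (C \ {c}) ∈ T := ⟨hbase, hXC'⟩
  have h1 : insert c (insert e (C \ {c})) = insert e C := by
    rw [Set.insert_comm, Set.insert_diff_singleton, Set.insert_eq_of_mem hcC]
  have h2 : c ∉ insert e (C \ {c}) := by
    rintro (h | ⟨_, h⟩)
    exacts [hce h, h rfl]
  have hkey : 2 ^ ordN c + nval (insert e (C \ {c})) = 2 ^ ordN e + nval C := by
    rw [← nval_insert h2, h1, nval_insert heC]
  have hlt : 2 ^ ordN e < 2 ^ ordN c :=
    Nat.pow_lt_pow_right (by norm_num) (ordN_lt hec)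
  have hle : nval C ≤ nval (insert e (C \ {c})) := hCmin' _ hmem
  omega

end InternalOrderMeet

theorem internal_order_has_meets {α : Type*} [Fintype α] [LinearOrder α]
    (M : Matroid α) (hE : M.E = Set.univ)
    (B B' : Set α) (hB : M.IsBase B) (hB' : M.IsBase B') :
    ∃ C : Set α, M.IsBase C ∧
      IP M (· < ·) C ⊆ IP M (· < ·) B ∩ IP M (· < ·) B' ∧
      ∀ D : Set α, M.IsBase D → IP M (· < ·) D ⊆ IP M (· < ·) B →
        IP M (· < ·) D ⊆ IP M (· < ·) B' → IP M (· < ·) D ⊆ IP M (· < ·) C := by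
  classical
  set X := IP M (· < ·) B ∩ IP M (· < ·) B' with hX
  have hXB : X ⊆ B := fun x hx => hx.1.1
  have hXind : M.Indep X := hB.indep.subset hXB
  obtain ⟨C, hC, hXC, hIPC⟩ := InternalOrderMeet.exists_min_basis hE hXind
  refine ⟨C, hC, hIPC, ?_⟩
  intro D hD h1 h2
  exact InternalOrderMeet.IP_le_of_IP_le_X hE hC hXC hIPC ((D \ C).ncard) D hD
    (Set.subset_inter h1 h2) le_rfl
end

section
/- Let M be a matroid of rank r on a finite ground set E and let B be any basis of M. Then the following identity of polynomials in t holds: Σ_k f_{k−1}(M) t^k (1−t)^{r−k} = Σ_{I} t^{|I|} · Σ_j h_j((M/I)|_B) t^j, where the outer sum on the right ranges over all independent sets I of M with I ∩ B = ∅, M/I denotes contraction of I, and (M/I)|_B denotes the restriction of M/I to the set B. Equivalently, h(M, t) = Σ_{I independent, I∩B=∅} t^{|I|} h((M/I)|_B, t). (Theorem of Klee–Samper restated in Section 7.) -/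
/-!
STATEMENT 17 (Theorem of Klee–Samper, Section 7): for a matroid `M` of rank `r`
and any basis `B`, as polynomials in `t`:
`h(M, t) = Σ_{I independent, I ∩ B = ∅} t^{|I|} · h((M/I)|_B, t)`,
where both `h`-polynomials are written via `h(N, t) = Σ_k f_{k-1}(N) t^k (1-t)^{d-k}`
with `d = rank N`. Since `I` is independent and disjoint from `B`, the
independent sets of `(M/I)|_B` are the `S ⊆ B` with `S ∪ I` independent in `M`,
and `rank (M/I)|_B = r - |I|`. The identity is stated for every `t : ℝ`.
-/

open scoped BigOperators Classical

/-- `f_{k-1}(M)`: the number of independent sets of `M` of cardinality `k`. -/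
noncomputable def fNum {α : Type*} (M : Matroid α) (k : ℕ) : ℕ :=
  {S : Set α | M.Indep S ∧ S.ncard = k}.ncard

/-- `f_{k-1}((M/I)|_B)`: the number of independent sets of cardinality `k` of
the matroid obtained from `M` by contracting the independent set `I` (disjoint
from `B`) and restricting to `B`. -/
noncomputable def fNumCR {α : Type*} (M : Matroid α) (I Bs : Set α) (k : ℕ) : ℕ :=
  {S : Set α | S ⊆ Bs ∧ M.Indep (S ∪ I) ∧ S.ncard = k}.ncard

/-- Counting subsets of a finite type via finsets. -/
lemma ncard_setOf_eq_card_filter {α : Type*} [Fintype α] (P : Set α → Prop) :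
    {S : Set α | P S}.ncard
      = (Finset.univ.filter (fun J : Finset α => P ↑J)).card := by
  classical
  rw [Set.ncard_eq_toFinset_card', Set.toFinset_card, ← Fintype.card_subtype]
  exact Fintype.card_congr
    ((Equiv.subtypeEquiv Fintype.finsetEquivSet (fun J => by
      simp [Fintype.finsetEquivSet]))).symm

lemma indep_ncard_le {α : Type*} [Fintype α] (M : Matroid α) (r : ℕ)
    (hr : ∀ C : Set α, M.IsBase C → C.ncard = r) {S : Set α}
    (h : M.Indep S) : S.ncard ≤ r := by
  obtain ⟨C, hC, hSC⟩ := h.exists_isBase_superset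
  rw [← hr C hC]
  exact Set.ncard_le_ncard hSC (Set.toFinite C)

theorem klee_samper_h_polynomial_identity {α : Type*} [Fintype α]
    (M : Matroid α) (hE : M.E = Set.univ)
    (r : ℕ) (hr : ∀ C : Set α, M.IsBase C → C.ncard = r)
    (Bs : Set α) (hBs : M.IsBase Bs) :
    ∀ t : ℝ,
      ∑ k ∈ Finset.range (r + 1), (fNum M k : ℝ) * t ^ k * (1 - t) ^ (r - k)
        = ∑ I ∈ Finset.univ.filter
            (fun I : Finset α => M.Indep (I : Set α) ∧ (I : Set α) ∩ Bs = ∅),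
            t ^ I.card *
              ∑ k ∈ Finset.range (r - I.card + 1),
                (fNumCR M (I : Set α) Bs k : ℝ) * t ^ k *
                  (1 - t) ^ (r - I.card - k) := by
  classical
  intro t
  have hcard : ∀ J : Finset α, M.Indep ↑J → J.card ≤ r := by
    intro J h
    have := indep_ncard_le M r hr h
    simpa [Set.ncard_coe_finset] using this
  -- Rewrite the LHS as a sum over independent finsets.
  have hLHS :
      ∑ k ∈ Finset.range (r + 1), (fNum M k : ℝ) * t ^ k * (1 - t) ^ (r - k)
        = ∑ J ∈ Finset.univ.filter (fun J : Finset α => M.Indep ↑J),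
            t ^ J.card * (1 - t) ^ (r - J.card) := by
    rw [← Finset.sum_fiberwise_of_maps_to (g := Finset.card)
      (t := Finset.range (r + 1))
      (fun J hJ => Finset.mem_range.2
        (Nat.lt_succ_of_le (hcard J (Finset.mem_filter.1 hJ).2)))
      (fun J => t ^ J.card * (1 - t) ^ (r - J.card))]
    refine Finset.sum_congr rfl fun k _ => ?_
    have hf : (fNum M k : ℝ)
        = (((Finset.univ.filter (fun J : Finset α => M.Indep ↑J)).filter
            (fun J => J.card = k)).card : ℝ) := by
      congr 1
      rw [fNum, ncard_setOf_eq_card_filter, Finset.filter_filter]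
      congr 1
      ext J
      simp [Set.ncard_coe_finset]
    rw [hf]
    have hfib : ∑ J ∈ (Finset.univ.filter (fun J : Finset α => M.Indep ↑J)).filter
        (fun J => J.card = k), t ^ J.card * (1 - t) ^ (r - J.card)
        = ((Finset.univ.filter (fun J : Finset α => M.Indep ↑J)).filter
            (fun J => J.card = k)).card • (t ^ k * (1 - t) ^ (r - k)) := by
      rw [← Finset.sum_const]
      exact Finset.sum_congr rfl fun J hJ => by rw [(Finset.mem_filter.1 hJ).2]
    rw [hfib, nsmul_eq_mul]
    ring
  rw [hLHS]
  -- Rewrite each inner sum on the RHS as a sum over finsets S.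
  have hRHS : ∀ I : Finset α, M.Indep (I : Set α) → (I : Set α) ∩ Bs = ∅ →
      t ^ I.card *
          ∑ k ∈ Finset.range (r - I.card + 1),
            (fNumCR M (I : Set α) Bs k : ℝ) * t ^ k * (1 - t) ^ (r - I.card - k)
        = ∑ S ∈ Finset.univ.filter
            (fun S : Finset α => ↑S ⊆ Bs ∧ M.Indep (↑S ∪ ↑I)),
            t ^ (I.card + S.card) * (1 - t) ^ (r - (I.card + S.card)) := by
    intro I hI hIB
    have hSle : ∀ S : Finset α, ↑S ⊆ Bs → M.Indep (↑S ∪ ↑I) →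
        S.card ≤ r - I.card := by
      intro S hSB hSI
      have hdisj : Disjoint (S : Set α) (I : Set α) := by
        rw [Set.disjoint_iff_inter_eq_empty]
        rw [Set.inter_comm]
        exact Set.eq_empty_of_subset_empty
          (by rw [← hIB]; exact Set.inter_subset_inter_right _ hSB)
      have hun : (↑S ∪ ↑I : Set α).ncard = S.card + I.card := by
        rw [Set.ncard_union_eq hdisj (Set.toFinite _) (Set.toFinite _),
          Set.ncard_coe_finset, Set.ncard_coe_finset]
      have := indep_ncard_le M r hr hSI
      rw [hun] at this
      omega
    have hinner : ∀ k ∈ Finset.range (r - I.card + 1),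
        (fNumCR M (I : Set α) Bs k : ℝ) * t ^ k * (1 - t) ^ (r - I.card - k)
          = ∑ S ∈ (Finset.univ.filter
              (fun S : Finset α => ↑S ⊆ Bs ∧ M.Indep (↑S ∪ ↑I))).filter
              (fun S => S.card = k),
              t ^ S.card * (1 - t) ^ (r - I.card - S.card) := by
      intro k _
      have hf : (fNumCR M (I : Set α) Bs k : ℝ)
          = (((Finset.univ.filter
              (fun S : Finset α => ↑S ⊆ Bs ∧ M.Indep (↑S ∪ ↑I))).filter
              (fun S => S.card = k)).card : ℝ) := by
        congr 1
        rw [fNumCR, ncard_setOf_eq_card_filter, Finset.filter_filter]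
        congr 1
        ext S
        simp [Set.ncard_coe_finset, and_assoc]
      rw [hf]
      have hfib : ∑ S ∈ (Finset.univ.filter
          (fun S : Finset α => ↑S ⊆ Bs ∧ M.Indep (↑S ∪ ↑I))).filter
          (fun S => S.card = k),
          t ^ S.card * (1 - t) ^ (r - I.card - S.card)
          = ((Finset.univ.filter
              (fun S : Finset α => ↑S ⊆ Bs ∧ M.Indep (↑S ∪ ↑I))).filter
              (fun S => S.card = k)).card
              • (t ^ k * (1 - t) ^ (r - I.card - k)) := by
        rw [← Finset.sum_const]
        exact Finset.sum_congr rfl fun S hS => by rw [(Finset.mem_filter.1 hS).2]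
      rw [hfib, nsmul_eq_mul]
      ring
    rw [Finset.sum_congr rfl hinner]
    rw [Finset.sum_fiberwise_of_maps_to (g := Finset.card)
      (t := Finset.range (r - I.card + 1))
      (fun S hS => Finset.mem_range.2 (Nat.lt_succ_of_le
        (hSle S (Finset.mem_filter.1 hS).2.1 (Finset.mem_filter.1 hS).2.2)))
      (fun S => t ^ S.card * (1 - t) ^ (r - I.card - S.card))]
    rw [Finset.mul_sum]
    refine Finset.sum_congr rfl fun S hS => ?_
    have h1 : r - (I.card + S.card) = r - I.card - S.card := by omega
    rw [h1, pow_add]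
    ring
  rw [Finset.sum_congr rfl (fun I hI =>
    hRHS I (Finset.mem_filter.1 hI).2.1 (Finset.mem_filter.1 hI).2.2)]
  -- Combine the double sum into a single sum over a sigma type and biject.
  rw [Finset.sum_sigma' (Finset.univ.filter
      (fun I : Finset α => M.Indep (I : Set α) ∧ (I : Set α) ∩ Bs = ∅))
    (fun I => Finset.univ.filter
      (fun S : Finset α => ↑S ⊆ Bs ∧ M.Indep (↑S ∪ ↑I)))
    (fun I S => t ^ (I.card + S.card) * (1 - t) ^ (r - (I.card + S.card)))]
  set Bf : Finset α := Bs.toFinset with hBfdef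
  have hBf : (Bf : Set α) = Bs := Set.coe_toFinset Bs
  refine Finset.sum_nbij' (fun J => ⟨J \ Bf, J ∩ Bf⟩) (fun p => p.2 ∪ p.1)
    ?_ ?_ ?_ ?_ ?_
  · intro J hJ
    have hJind : M.Indep (J : Set α) := (Finset.mem_filter.1 hJ).2
    refine Finset.mem_sigma.2 ⟨Finset.mem_filter.2 ⟨Finset.mem_univ _, ?_, ?_⟩,
      Finset.mem_filter.2 ⟨Finset.mem_univ _, ?_, ?_⟩⟩
    · exact hJind.subset (by rw [Finset.coe_sdiff]; exact Set.diff_subset)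
    · rw [Finset.coe_sdiff, hBf]
      ext x; simp
    · rw [Finset.coe_inter, hBf]
      exact Set.inter_subset_right
    · have : (↑(J ∩ Bf) : Set α) ∪ ↑(J \ Bf) = (J : Set α) := by
        rw [Finset.coe_inter, Finset.coe_sdiff]
        ext x; simp
      rw [this]
      exact hJind
  · intro p hp
    obtain ⟨hp1, hp2⟩ := Finset.mem_sigma.1 hp
    exact Finset.mem_filter.2 ⟨Finset.mem_univ _, by
      have := (Finset.mem_filter.1 hp2).2.2
      rwa [Finset.coe_union]⟩
  · intro J hJ
    simp only
    ext x
    simp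
    tauto
  · intro p hp
    obtain ⟨hp1, hp2⟩ := Finset.mem_sigma.1 hp
    have hIB : (↑p.1 : Set α) ∩ Bs = ∅ := (Finset.mem_filter.1 hp1).2.2
    have hSB : (↑p.2 : Set α) ⊆ Bs := (Finset.mem_filter.1 hp2).2.1
    have hIB' : p.1 ∩ Bf = ∅ := by
      apply Finset.coe_injective
      rw [Finset.coe_inter, hBf]
      simpa using hIB
    have hSB' : p.2 ⊆ Bf := by
      intro x hx
      rw [← Finset.mem_coe, hBf]
      exact hSB hx
    have h1 : (p.2 ∪ p.1) \ Bf = p.1 := by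
      ext x
      simp only [Finset.mem_sdiff, Finset.mem_union]
      constructor
      · rintro ⟨h | h, hb⟩
        · exact absurd (hSB' h) hb
        · exact h
      · intro h
        refine ⟨Or.inr h, fun hb => ?_⟩
        have : x ∈ p.1 ∩ Bf := Finset.mem_inter.2 ⟨h, hb⟩
        rw [hIB'] at this
        exact absurd this (Finset.notMem_empty x)
    have h2 : (p.2 ∪ p.1) ∩ Bf = p.2 := by
      ext x
      simp only [Finset.mem_inter, Finset.mem_union]
      constructor
      · rintro ⟨h | h, hb⟩
        · exact h
        · have : x ∈ p.1 ∩ Bf := Finset.mem_inter.2 ⟨h, hb⟩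
          rw [hIB'] at this
          exact absurd this (Finset.notMem_empty x)
      · intro h
        exact ⟨Or.inl h, hSB' h⟩
    exact Sigma.ext h1 (heq_of_eq h2)
  · intro J hJ
    have h3 : (J \ Bf).card + (J ∩ Bf).card = J.card := by
      rw [add_comm]
      exact Finset.card_inter_add_card_sdiff J Bf
    rw [h3]
end
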